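/- Let b ∈ R and ε = ±1. The matrices T± = [[a,0,0],[0,b±1,1],[0,-1,b∓1]] satisfy: T+ and T- are not conjugate by any matrix in O(2,1) (the group of matrices P with P^t diag(1,1,-1) P = diag(1,1,-1)), even though they have the same characteristic polynomial. -/
import Mathlib


open Matrix

/-- Key lemma: no `P` satisfying the O(2,1) condition conjugates the `+`-form
to the `-`-form, given the intertwining relation `T₊ P = P T₋`. -/
private lemma stmt_18_aux (a b : ℝ) (P : Matrix (Fin 3) (Fin 3) ℝ)
    (hJ : Pᵀ * Matrix.diagonal ![1, 1, -1] * P = Matrix.diagonal ![1, 1, -1])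
    (hTP : !![a, 0, 0; 0, b + 1, 1; 0, -1, b - 1] * P
      = P * !![a, 0, 0; 0, b - 1, 1; 0, -1, b + 1]) : False := by
  have e01 := congrFun (congrFun hTP 0) 1
  have e02 := congrFun (congrFun hTP 0) 2
  have e10 := congrFun (congrFun hTP 1) 0
  have e11 := congrFun (congrFun hTP 1) 1
  have e12 := congrFun (congrFun hTP 1) 2
  have e20 := congrFun (congrFun hTP 2) 0
  have g00 := congrFun (congrFun hJ 0) 0
  have g11 := congrFun (congrFun hJ 1) 1
  have g22 := congrFun (congrFun hJ 2) 2
  have g01 := congrFun (congrFun hJ 0) 1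
  have g02 := congrFun (congrFun hJ 0) 2
  simp [Matrix.mul_apply, Fin.sum_univ_three, Matrix.diagonal, Matrix.vecHead, Matrix.vecTail] at e01 e02 e10 e11 e12 e20 g00 g11 g22 g01 g02
  have hq12 : P 1 1 + P 1 2 + (P 2 1 + P 2 2) = 0 := by linear_combination e11 + e12
  have hw0 : (a - b) * (P 0 2 - P 0 1) = 2 * (P 0 1 + P 0 2) := by
    linear_combination e02 - e01
  have hw12 : (P 1 2 - P 1 1) + (P 2 2 - P 2 1) = 2 * (P 1 1 + P 1 2) := by
    linear_combination e12 - e11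
  have key : (a - b) * (P 0 2 - P 0 1) ^ 2
      + ((P 1 2 - P 1 1) + (P 2 2 - P 2 1)) ^ 2 = -4 := by
    linear_combination (P 0 2 - P 0 1) * hw0
      + ((P 1 2 - P 1 1) + (P 2 2 - P 2 1)) * hw12
      + 2 * (P 2 2 - P 2 1) * hq12 + 2 * g22 - 2 * g11
  rcases le_or_gt 0 (a - b) with hc | hc
  · nlinarith [sq_nonneg ((P 1 2 - P 1 1) + (P 2 2 - P 2 1)),
      mul_nonneg hc (sq_nonneg (P 0 2 - P 0 1))]
  · have hc' : a - b ≠ 0 := ne_of_lt hc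
    have h2z : P 1 0 + P 2 0 = 0 := by
      have h : (a - b) * (P 1 0 + P 2 0) = 0 := by linear_combination -e10 - e20
      exact (mul_eq_zero.mp h).resolve_left hc'
    have hp10 : P 1 0 = 0 := by
      have h : (a - b) * P 1 0 = 0 := by linear_combination h2z - e10
      exact (mul_eq_zero.mp h).resolve_left hc'
    have hp20 : P 2 0 = 0 := by linarith
    have h00 : P 0 0 * P 0 0 = 1 := by
      linear_combination g00 - P 1 0 * hp10 + P 2 0 * hp20
    have hw0z : P 0 2 - P 0 1 = 0 := by
      have h1 : P 0 0 * P 0 1 = 0 := by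
        linear_combination g01 - P 1 1 * hp10 + P 2 1 * hp20
      have h2 : P 0 0 * P 0 2 = 0 := by
        linear_combination g02 - P 1 2 * hp10 + P 2 2 * hp20
      have h3 : P 0 0 * (P 0 2 - P 0 1) = 0 := by linear_combination h2 - h1
      rcases mul_eq_zero.mp h3 with h | h
      · exfalso; rw [h] at h00; norm_num at h00
      · exact h
    have hfin : ((P 1 2 - P 1 1) + (P 2 2 - P 2 1)) ^ 2 = -4 := by
      linear_combination key - (a - b) * (P 0 2 - P 0 1) * hw0z
    nlinarith [sq_nonneg ((P 1 2 - P 1 1) + (P 2 2 - P 2 1))]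

theorem stmt_18 (a b : ℝ) :
    (!![a, 0, 0; 0, b + 1, 1; 0, -1, b - 1]).charpoly
      = (!![a, 0, 0; 0, b - 1, 1; 0, -1, b + 1]).charpoly ∧
    ¬ ∃ P : Matrix (Fin 3) (Fin 3) ℝ,
        Pᵀ * Matrix.diagonal ![1, 1, -1] * P = Matrix.diagonal ![1, 1, -1] ∧
        P⁻¹ * !![a, 0, 0; 0, b + 1, 1; 0, -1, b - 1] * P
          = !![a, 0, 0; 0, b - 1, 1; 0, -1, b + 1] := by
  constructor
  · simp only [Matrix.charpoly, Matrix.det_fin_three, charmatrix_apply]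
    simp [Matrix.one_apply]
    ring
  · rintro ⟨P, hJ, hC⟩
    have hdet : P.det ^ 2 = 1 := by
      have h := congrArg Matrix.det hJ
      simp [Matrix.det_mul, Matrix.det_diagonal, Fin.prod_univ_three] at h
      nlinarith [h]
    have hu : IsUnit P.det := by
      refine isUnit_iff_ne_zero.mpr ?_
      intro h0; rw [h0] at hdet; norm_num at hdet
    have hTP : !![a, 0, 0; 0, b + 1, 1; 0, -1, b - 1] * P
        = P * !![a, 0, 0; 0, b - 1, 1; 0, -1, b + 1] := by
      have h := congrArg (P * ·) hC
      simpa [← Matrix.mul_assoc, Matrix.mul_nonsing_inv P hu] using h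
    exact stmt_18_aux a b P hJ hTP
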